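/- If A is self-adjoint and positive definite on a finite-dimensional Hilbert space H and u solves the second-order equation d²u/dt² + A u = f(t) with u(0)=u⁰, u'(0)=v⁰, then ‖u'(t)‖_A² + ‖A u(t)‖² ≤ exp(t) ( ‖A u⁰‖² + ‖v⁰‖_A² + ∫₀ᵗ exp(−θ) ‖f(θ)‖_A² dθ ). -/

import Mathlib

open scoped RealInnerProductSpace

theorem stmt1 {H : Type*} [NormedAddCommGroup H] [InnerProductSpace ℝ H]
    [FiniteDimensional ℝ H]
    (A : H →L[ℝ] H) (hA : IsSelfAdjoint A)
    (hApos : ∀ x : H, x ≠ 0 → 0 < ⟪A x, x⟫)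
    (T : ℝ) (hT : 0 ≤ T)
    (u u' u'' f : ℝ → H) (hf : Continuous f)
    (hu' : ∀ t ∈ Set.Icc (0:ℝ) T, HasDerivAt u (u' t) t)
    (hu'' : ∀ t ∈ Set.Icc (0:ℝ) T, HasDerivAt u' (u'' t) t)
    (hode : ∀ t ∈ Set.Icc (0:ℝ) T, u'' t + A (u t) = f t)
    (u0 v0 : H) (hinit : u 0 = u0) (hinit' : u' 0 = v0) :
    ∀ t ∈ Set.Icc (0:ℝ) T,
      ⟪A (u' t), u' t⟫ + ‖A (u t)‖ ^ 2 ≤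
        Real.exp t * (‖A u0‖ ^ 2 + ⟪A v0, v0⟫ +
          ∫ θ in (0:ℝ)..t, Real.exp (-θ) * ⟪A (f θ), f θ⟫) := by
  have symm : ∀ x y : H, ⟪A x, y⟫ = ⟪x, A y⟫ :=
    ContinuousLinearMap.isSelfAdjoint_iff_isSymmetric.mp hA
  have nonneg : ∀ x : H, 0 ≤ ⟪A x, x⟫ := by
    intro x
    rcases eq_or_ne x 0 with h | h
    · simp [h]
    · exact le_of_lt (hApos x h)
  set g : ℝ → ℝ := fun t => ⟪A (f t), f t⟫ with hg_def
  set E : ℝ → ℝ := fun t => ⟪A (u' t), u' t⟫ + ⟪A (u t), A (u t)⟫ with hE_def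
  have hg_cont : Continuous fun θ => Real.exp (-θ) * g θ := by
    have : Continuous g :=
      continuous_inner.comp ((A.continuous.comp hf).prodMk hf)
    exact (Real.continuous_exp.comp continuous_neg).mul this
  set φ : ℝ → ℝ := fun t =>
    Real.exp (-t) * E t - ∫ θ in (0:ℝ)..t, Real.exp (-θ) * g θ with hφ_def
  set S : ℝ → ℝ := fun t => ⟪A (u' t), u'' t⟫ + ⟪A (u'' t), u' t⟫
      + (⟪A (u t), A (u' t)⟫ + ⟪A (u' t), A (u t)⟫) with hS_def
  -- derivative of E
  have hE : ∀ t ∈ Set.Icc (0:ℝ) T, HasDerivAt E (S t) t := by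
    intro t ht
    have h1 : HasDerivAt (fun s => A (u' s)) (A (u'' t)) t :=
      A.hasFDerivAt.comp_hasDerivAt t (hu'' t ht)
    have h2 : HasDerivAt (fun s => A (u s)) (A (u' t)) t :=
      A.hasFDerivAt.comp_hasDerivAt t (hu' t ht)
    exact (HasDerivAt.inner ℝ h1 (hu'' t ht)).add (HasDerivAt.inner ℝ h2 h2)
  -- derivative of φ
  have hφ : ∀ t ∈ Set.Icc (0:ℝ) T,
      HasDerivAt φ (Real.exp (-t) * (S t - E t - g t)) t := by
    intro t ht
    have hexp : HasDerivAt (fun s : ℝ => Real.exp (-s)) (-Real.exp (-t)) t := by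
      simpa using (hasDerivAt_neg t).exp
    have hint : HasDerivAt (fun s => ∫ θ in (0:ℝ)..s, Real.exp (-θ) * g θ)
        (Real.exp (-t) * g t) t :=
      (hg_cont.integral_hasStrictDerivAt 0 t).hasDerivAt
    have := (hexp.mul (hE t ht)).sub hint
    refine HasDerivAt.congr_deriv this ?_
    ring
  -- key inequality: S ≤ E + g on Icc
  have hkey : ∀ t ∈ Set.Icc (0:ℝ) T, S t ≤ E t + g t := by
    intro t ht
    have hu''eq : u'' t = f t - A (u t) := eq_sub_of_add_eq (hode t ht)
    have e1 : ⟪A (u' t), u'' t⟫ = ⟪A (u'' t), u' t⟫ := by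
      rw [symm, real_inner_comm]
    have e2 : ⟪A (u'' t), u' t⟫ = ⟪A (f t), u' t⟫ - ⟪A (A (u t)), u' t⟫ := by
      rw [hu''eq, map_sub, inner_sub_left]
    have e3 : ⟪A (u t), A (u' t)⟫ = ⟪A (A (u t)), u' t⟫ := (symm (A (u t)) (u' t)).symm
    have e4 : ⟪A (u' t), A (u t)⟫ = ⟪A (u t), A (u' t)⟫ := real_inner_comm _ _
    -- Cauchy-Schwarz-type inequality
    have cs : (0:ℝ) ≤ ⟪A (f t - u' t), f t - u' t⟫ := nonneg _
    have csx : (0:ℝ) ≤ ⟪A (f t), f t⟫ - ⟪A (f t), u' t⟫ - ⟪A (u' t), f t⟫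
        + ⟪A (u' t), u' t⟫ := by
      have : ⟪A (f t - u' t), f t - u' t⟫ = ⟪A (f t), f t⟫ - ⟪A (f t), u' t⟫
          - ⟪A (u' t), f t⟫ + ⟪A (u' t), u' t⟫ := by
        rw [map_sub, inner_sub_left, inner_sub_right, inner_sub_right]
        ring
      linarith [this ▸ cs]
    have e5 : ⟪A (u' t), f t⟫ = ⟪A (f t), u' t⟫ := by
      rw [symm, real_inner_comm]
    have hAA : (0:ℝ) ≤ ⟪A (u t), A (u t)⟫ := real_inner_self_nonneg
    simp only [hS_def, hE_def, hg_def]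
    rw [e1, e2, e3, e4, e3]
    linarith
  -- φ is antitone on Icc
  have hmono : AntitoneOn φ (Set.Icc 0 T) := by
    apply antitoneOn_of_deriv_nonpos (convex_Icc 0 T)
    · exact fun t ht => (hφ t ht).continuousAt.continuousWithinAt
    · intro t ht
      rw [interior_Icc] at ht
      exact (hφ t (Set.Ioo_subset_Icc_self ht)).differentiableAt.differentiableWithinAt
    · intro t ht
      rw [interior_Icc] at ht
      have ht' := Set.Ioo_subset_Icc_self ht
      rw [(hφ t ht').deriv]
      have := hkey t ht'
      have hexp : (0:ℝ) ≤ Real.exp (-t) := (Real.exp_pos _).le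
      nlinarith
  intro t ht
  have h0 : (0:ℝ) ∈ Set.Icc (0:ℝ) T := Set.left_mem_Icc.mpr hT
  have hle : φ t ≤ φ 0 := hmono h0 ht ht.1
  have hφ0 : φ 0 = E 0 := by simp [hφ_def]
  have h1 : Real.exp (-t) * E t ≤ E 0 + ∫ θ in (0:ℝ)..t, Real.exp (-θ) * g θ := by
    have := hle
    rw [hφ0] at this
    simp only [hφ_def] at this
    linarith
  have h2 : E t ≤ Real.exp t * (E 0 + ∫ θ in (0:ℝ)..t, Real.exp (-θ) * g θ) := by
    have hpos : (0:ℝ) < Real.exp (-t) := Real.exp_pos _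
    have := mul_le_mul_of_nonneg_left h1 (Real.exp_pos t).le
    rwa [← mul_assoc, ← Real.exp_add, add_neg_cancel, Real.exp_zero, one_mul] at this
  have hE0 : E 0 = ‖A u0‖ ^ 2 + ⟪A v0, v0⟫ := by
    simp only [hE_def, hinit, hinit']
    rw [real_inner_self_eq_norm_sq]
    ring
  have hEt : E t = ⟪A (u' t), u' t⟫ + ‖A (u t)‖ ^ 2 := by
    simp only [hE_def]
    rw [real_inner_self_eq_norm_sq]
  rw [← hEt, ← hE0]
  exact h2
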